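/- Let f : ℕ × ℕ → ℝ ∪ {+∞} be interval costs where f(j,i) = +∞ whenever the interval length i - j + 1 exceeds a bound B ≥ 1, and f(j,i) < +∞ otherwise. Define the DP M(0)=0, M(i)=min_{1≤j≤i}(M(j-1)+f(j,i)). Then M(n) is finite and equals the minimum of the total cost over all partitions of {1,...,n} into consecutive intervals each of length at most B. -/

import Mathlib

/-- Cost of a partition into consecutive segments (lengths listed in `L`),
with values in `ℝ ∪ {+∞}`. -/
def compCostT (f : ℕ × ℕ → WithTop ℝ) : ℕ → List ℕ → WithTop ℝ
  | _, [] => 0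
  | s, c :: L => f (s + 1, s + c) + compCostT f (s + c) L

lemma compCostT_append (f : ℕ × ℕ → WithTop ℝ) (c : ℕ) :
    ∀ (L : List ℕ) (s : ℕ),
      compCostT f s (L ++ [c]) = compCostT f s L + f (s + L.sum + 1, s + L.sum + c)
  | [], s => by simp [compCostT]
  | a :: L, s => by
    rw [List.cons_append]
    show f (s + 1, s + a) + compCostT f (s + a) (L ++ [c]) = _
    rw [compCostT_append f c L (s + a), List.sum_cons, ← add_assoc]
    have h1 : s + a + L.sum = s + (a + L.sum) := by omega
    rw [h1]
    rfl

lemma compCostT_ne_top (f : ℕ × ℕ → WithTop ℝ) (B : ℕ)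
    (hf : ∀ j i : ℕ, 1 ≤ j → j ≤ i →
      (if B < i - j + 1 then f (j, i) = ⊤ else f (j, i) ≠ ⊤)) :
    ∀ (L : List ℕ) (s : ℕ), (∀ c ∈ L, 1 ≤ c ∧ c ≤ B) → compCostT f s L ≠ ⊤
  | [], s, _ => by simp [compCostT]
  | a :: L, s, h => by
    obtain ⟨ha1, haB⟩ := h a (by simp)
    have hfa := hf (s + 1) (s + a) (by omega) (by omega)
    have hl : s + a - (s + 1) + 1 = a := by omega
    rw [hl, if_neg (by omega)] at hfa
    have hL := compCostT_ne_top f B hf L (s + a) (fun c hc => h c (by simp [hc]))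
    simp only [compCostT]
    exact WithTop.add_ne_top.mpr ⟨hfa, hL⟩

/-- Bounded-batch DP: if `f (j,i) = +∞` exactly when the interval length exceeds
`B ≥ 1`, the DP value `M n` is finite and equals the minimum total cost over
partitions of `{1,...,n}` into consecutive intervals of length at most `B`. -/
theorem stmt8 (n B : ℕ) (hn : 1 ≤ n) (hB : 1 ≤ B) (f : ℕ × ℕ → WithTop ℝ)
    (hf : ∀ j i : ℕ, 1 ≤ j → j ≤ i →
      (if B < i - j + 1 then f (j, i) = ⊤ else f (j, i) ≠ ⊤))
    (M : ℕ → WithTop ℝ) (hM0 : M 0 = 0)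
    (hM : ∀ i, ∀ hi : 1 ≤ i, i ≤ n →
      M i = (Finset.Icc 1 i).inf' (Finset.nonempty_Icc.mpr hi)
        (fun j => M (j - 1) + f (j, i))) :
    M n ≠ ⊤ ∧
      IsLeast {x : WithTop ℝ | ∃ L : List ℕ,
          (∀ c ∈ L, 1 ≤ c ∧ c ≤ B) ∧ L.sum = n ∧ x = compCostT f 0 L}
        (M n) := by
  have key : ∀ m, m ≤ n → IsLeast {x : WithTop ℝ | ∃ L : List ℕ,
      (∀ c ∈ L, 1 ≤ c ∧ c ≤ B) ∧ L.sum = m ∧ x = compCostT f 0 L} (M m) := by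
    intro m
    induction m using Nat.strong_induction_on with
    | _ m ih =>
      intro hmn
      rcases Nat.eq_zero_or_pos m with hm0 | hm1
      · subst hm0
        constructor
        · exact ⟨[], by simp, by simp, by simp [hM0, compCostT]⟩
        · rintro x ⟨L, hL, hsum, rfl⟩
          cases L with
          | nil => simp [hM0, compCostT]
          | cons a L =>
            exfalso
            have := (hL a (by simp)).1
            simp [List.sum_cons] at hsum
            omega
      · have hrec := hM m hm1 hmn
        -- finiteness of M m
        have hself : M m ≤ M (m - 1) + f (m, m) := by
          rw [hrec]
          exact Finset.inf'_le _ (Finset.mem_Icc.mpr ⟨hm1, le_rfl⟩)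
        have hMm1 : M (m - 1) ≠ ⊤ := by
          obtain ⟨L, hL, hsum, hcost⟩ := (ih (m - 1) (by omega) (by omega)).1
          rw [hcost]; exact compCostT_ne_top f B hf L 0 hL
        have hfmm : f (m, m) ≠ ⊤ := by
          have := hf m m hm1 le_rfl
          rwa [if_neg (by omega)] at this
        have hMmne : M m ≠ ⊤ := by
          intro h
          rw [h] at hself
          exact WithTop.add_ne_top.mpr ⟨hMm1, hfmm⟩ (top_le_iff.mp hself)
        constructor
        · -- membership
          obtain ⟨j, hj, hjeq⟩ := Finset.exists_mem_eq_inf' (Finset.nonempty_Icc.mpr hm1)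
            (fun j => M (j - 1) + f (j, m))
          rw [Finset.mem_Icc] at hj
          obtain ⟨hj1, hj2⟩ := hj
          have hMeq : M m = M (j - 1) + f (j, m) := by rw [hrec, hjeq]
          have hfj : f (j, m) ≠ ⊤ := by
            intro h
            rw [h, add_top] at hMeq
            exact hMmne hMeq
          have hlen : m - j + 1 ≤ B := by
            by_contra hc
            have := hf j m hj1 hj2
            rw [if_pos (by omega)] at this
            exact hfj this
          obtain ⟨L, hL, hsum, hcost⟩ := (ih (j - 1) (by omega) (by omega)).1
          refine ⟨L ++ [m - j + 1], ?_, ?_, ?_⟩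
          · intro c hc
            rcases List.mem_append.mp hc with h | h
            · exact hL c h
            · simp at h; omega
          · rw [List.sum_append, hsum]; simp; omega
          · have e1 : j - 1 + 1 = j := by omega
            have e2 : j - 1 + (m - j + 1) = m := by omega
            rw [compCostT_append, zero_add, hsum, e1, e2, hMeq, hcost]
        · -- lower bound
          rintro x ⟨L, hL, hsum, rfl⟩
          rcases List.eq_nil_or_concat L with rfl | ⟨L', c, rfl⟩
          <;> [skip; rw [List.concat_eq_append] at hL hsum ⊢]
          · simp at hsum; omega
          · have hsum' : L'.sum + c = m := by simpa using hsum
            have hc := hL c (by simp)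
            have hone : ∀ d ∈ L', 1 ≤ d ∧ d ≤ B := fun d hd => hL d (by simp [hd])
            have hcm : c ≤ m := by omega
            have hL'lt : L'.sum < m := by omega
            have hIH := ih L'.sum hL'lt (by omega)
            have hlow : M L'.sum ≤ compCostT f 0 L' := hIH.2 ⟨L', hone, rfl, rfl⟩
            have hjmem : L'.sum + 1 ∈ Finset.Icc 1 m := Finset.mem_Icc.mpr ⟨by omega, by omega⟩
            have h1 : M m ≤ M (L'.sum + 1 - 1) + f (L'.sum + 1, m) := by
              rw [hrec]
              exact Finset.inf'_le _ hjmem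
            rw [compCostT_append, zero_add]
            calc M m ≤ M (L'.sum + 1 - 1) + f (L'.sum + 1, m) := h1
              _ = M L'.sum + f (L'.sum + 1, L'.sum + c) := by
                  have e1 : L'.sum + 1 - 1 = L'.sum := by omega
                  rw [e1, ← hsum']
              _ ≤ compCostT f 0 L' + f (L'.sum + 1, L'.sum + c) :=
                  add_le_add hlow le_rfl
  have h := key n le_rfl
  refine ⟨?_, h⟩
  obtain ⟨L, hL, hsum, hcost⟩ := h.1
  rw [hcost]
  exact compCostT_ne_top f B hf L 0 hL
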